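/- Let c(x) = Σ_{n≥0} C_n x^n be the generating function of the Catalan numbers C_n = (1/(n+1))·binom(2n,n), viewed as a formal power series over ℚ. Then for every positive integer k and every natural number n, the coefficient of x^n in c(x)^k equals (k/(n+k))·binom(2n+k-1, n). -/

import Mathlib

open PowerSeries Finset

/-- Value function. -/
noncomputable def V (n k : ℕ) : ℚ := ((k : ℚ) / ((n : ℚ) + (k : ℚ))) * ((2 * n + k - 1).choose n)

lemma V_diff (n k : ℕ) (hk : 0 < k) :
    V (n+1) k = ((2*(n+1)+k-1).choose (n+1) : ℚ) - ((2*(n+1)+k-1).choose n : ℚ) := by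
  obtain ⟨m, rfl⟩ : ∃ m, k = m + 1 := ⟨k - 1, by omega⟩
  have h : 2*(n+1)+(m+1)-1 = 2*n+m+2 := by omega
  simp only [V, h]
  have key := Nat.choose_succ_right_eq (2*n+m+2) n
  have h2 : 2*n+m+2 - n = n + m + 2 := by omega
  rw [h2] at key
  have key' : ((2*n+m+2).choose (n+1) : ℚ) * (n+1) = ((2*n+m+2).choose n : ℚ) * (n+m+2) := by
    exact_mod_cast congrArg (Nat.cast : ℕ → ℚ) key
  have hne : ((n:ℚ)+1) + (m+1) ≠ 0 := by positivity
  field_simp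
  push_cast at key' ⊢
  nlinarith [key']

lemma V_zero (k : ℕ) (hk : 0 < k) : V 0 k = 1 := by
  have h : (2*0+k-1).choose 0 = 1 := Nat.choose_zero_right _
  simp only [V, h]
  have : (k:ℚ) ≠ 0 := by exact_mod_cast hk.ne'
  push_cast
  field_simp
  ring

lemma V_rec (n k : ℕ) (hk : 0 < k) : V (n+1) (k+1) = V (n+1) k + V n (k+2) := by
  cases n with
  | zero =>
    rw [V_diff 0 (k+1) (by omega), V_diff 0 k hk, V_zero (k+2) (by omega)]
    simp only [Nat.choose_one_right, Nat.choose_zero_right]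
    have e1 : 2*(0+1)+(k+1)-1 = k+2 := by omega
    have e2 : 2*(0+1)+k-1 = k+1 := by omega
    rw [e1, e2]
    simp [Nat.choose_one_right]
    ring
  | succ m =>
    rw [V_diff (m+1) (k+1) (by omega), V_diff (m+1) k hk, V_diff m (k+2) (by omega)]
    have e1 : 2*(m+1+1)+(k+1)-1 = (2*m+k+3) + 1 := by omega
    have e2 : 2*(m+1+1)+k-1 = 2*m+k+3 := by omega
    have e3 : 2*(m+1)+(k+2)-1 = 2*m+k+3 := by omega
    rw [e1, e2, e3, Nat.choose_succ_succ (2*m+k+3) (m+1),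
      Nat.choose_succ_succ (2*m+k+3) m]
    push_cast
    ring

theorem stmt1 (c : PowerSeries ℚ)
    (hc : ∀ n : ℕ, PowerSeries.coeff n c = (1 / (n + 1 : ℚ)) * ((2 * n).choose n))
    (k : ℕ) (hk : 0 < k) (n : ℕ) :
    PowerSeries.coeff n (c ^ k) =
      ((k : ℚ) / ((n : ℚ) + (k : ℚ))) * ((2 * n + k - 1).choose n) := by
  -- coefficients are Catalan numbers
  have hcat : ∀ n : ℕ, PowerSeries.coeff n c = (catalan n : ℚ) := by
    intro n
    rw [hc n]
    have h := succ_mul_catalan_eq_centralBinom n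
    rw [Nat.centralBinom] at h
    have h' : ((n:ℚ)+1) * (catalan n : ℚ) = ((2*n).choose n : ℚ) := by exact_mod_cast h
    have hne : ((n:ℚ)+1) ≠ 0 := by positivity
    rw [← h']
    field_simp
  -- functional equation
  have hfe : c = 1 + PowerSeries.X * c^2 := by
    ext m
    cases m with
    | zero => simp [hcat 0, PowerSeries.coeff_zero_eq_constantCoeff]
    | succ m =>
      rw [map_add, PowerSeries.coeff_succ_X_mul, PowerSeries.coeff_one]
      simp only [Nat.succ_ne_zero, if_false, zero_add]
      rw [hcat, pow_two, PowerSeries.coeff_mul, catalan_succ']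
      push_cast
      exact Finset.sum_congr rfl fun ij _ => by rw [hcat, hcat]
  have hstep : ∀ (k n : ℕ), PowerSeries.coeff (n+1) (c^(k+1)) =
      PowerSeries.coeff (n+1) (c^k) + PowerSeries.coeff n (c^(k+2)) := by
    intro k n
    have hck : c^(k+1) = c^k + PowerSeries.X * c^(k+2) := by
      calc c^(k+1) = c^k * c := pow_succ c k
        _ = c^k * (1 + PowerSeries.X * c^2) := by rw [← hfe]
        _ = c^k + PowerSeries.X * c^(k+2) := by ring
    rw [hck, map_add, PowerSeries.coeff_succ_X_mul]
  have h0 : PowerSeries.constantCoeff c = 1 := by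
    have h := hcat 0
    rwa [PowerSeries.coeff_zero_eq_constantCoeff, catalan_zero, Nat.cast_one] at h
  have hzero : ∀ k : ℕ, PowerSeries.coeff 0 (c^k) = 1 := by
    intro k
    rw [PowerSeries.coeff_zero_eq_constantCoeff, map_pow, h0, one_pow]
  -- main claim
  have main : ∀ n : ℕ, ∀ k : ℕ, 0 < k → PowerSeries.coeff n (c^k) = V n k := by
    intro n
    induction n with
    | zero => intro k hk; rw [hzero k, V_zero k hk]
    | succ n IH =>
      intro k hk
      induction k with
      | zero => omega
      | succ k IHk =>
        cases Nat.eq_zero_or_pos k with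
        | inl h =>
          subst h
          rw [pow_one, hcat, V_diff n 1 one_pos]
          have hca := succ_mul_catalan_eq_centralBinom (n+1)
          rw [Nat.centralBinom] at hca
          have e : 2*(n+1)+1-1 = 2*(n+1) := by omega
          rw [e]
          have key := Nat.choose_succ_right_eq (2*(n+1)) n
          have h2 : 2*(n+1) - n = n + 2 := by omega
          rw [h2] at key
          have hca' : ((n:ℚ)+2) * (catalan (n+1) : ℚ) = ((2*(n+1)).choose (n+1) : ℚ) := by
            exact_mod_cast hca
          have key' : ((2*(n+1)).choose (n+1) : ℚ) * (n+1) = ((2*(n+1)).choose n : ℚ) * (n+2) := by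
            exact_mod_cast congrArg (Nat.cast : ℕ → ℚ) key
          nlinarith [hca', key']
        | inr h =>
          rw [hstep k n, IHk h, IH (k+2) (by omega), V_rec n k h]
  rw [main n k hk]; rfl
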